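/- Let S ⊆ {1,...,n}² be a (p,p)-sum-free set, a ∈ S, and let P ⊆ {1,...,n}² be a p-pairing set for a, meaning that for every (x₁,x₂) ∈ P the point (a₁/p − x₁, a₂/p − x₂) is also in P (assuming these are lattice points, e.g. p divides a₁ and a₂). Then |S ∩ P| ≤ |P| / 2. -/

import Mathlib

theorem stmt_12 (p : ℕ) (hp : 0 < p) (n : ℤ) (S P : Finset (ℤ × ℤ))
    (hS : S ⊆ Finset.Icc 1 n ×ˢ Finset.Icc 1 n)
    (hP : P ⊆ Finset.Icc 1 n ×ˢ Finset.Icc 1 n)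
    (hsf : ¬ ∃ u ∈ S, ∃ v ∈ S, ∃ w ∈ S, (p : ℤ) • u + (p : ℤ) • v = w)
    (a : ℤ × ℤ) (ha : a ∈ S) (hd1 : (p : ℤ) ∣ a.1) (hd2 : (p : ℤ) ∣ a.2)
    (hpair : ∀ x ∈ P, (a.1 / (p : ℤ) - x.1, a.2 / (p : ℤ) - x.2) ∈ P) :
    2 * (S ∩ P).card ≤ P.card := by
  set f : ℤ × ℤ → ℤ × ℤ := fun x => (a.1 / (p : ℤ) - x.1, a.2 / (p : ℤ) - x.2) with hf
  have key : (S ∩ P).card ≤ (P \ (S ∩ P)).card := by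
    apply Finset.card_le_card_of_injOn f
    · intro x hx
      rw [Finset.mem_coe, Finset.mem_inter] at hx
      have hfP : f x ∈ P := hpair x hx.2
      rw [Finset.mem_coe, Finset.mem_sdiff]
      refine ⟨hfP, fun hmem => ?_⟩
      rw [Finset.mem_inter] at hmem
      apply hsf
      refine ⟨x, hx.1, f x, hmem.1, a, ha, ?_⟩
      have h1 : (p : ℤ) * (a.1 / (p : ℤ)) = a.1 := Int.mul_ediv_cancel' hd1
      have h2 : (p : ℤ) * (a.2 / (p : ℤ)) = a.2 := Int.mul_ediv_cancel' hd2
      simp only [hf, Prod.ext_iff, smul_eq_mul, Prod.smul_fst, Prod.smul_snd,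
        Prod.fst_add, Prod.snd_add]
      constructor <;> linarith
    · intro x _ y _ hxy
      simp only [hf, Prod.ext_iff] at hxy
      exact Prod.ext (by linarith [hxy.1]) (by linarith [hxy.2])
  have h2 : (P \ (S ∩ P)).card = P.card - (S ∩ P).card :=
    Finset.card_sdiff_of_subset Finset.inter_subset_right
  have h3 : (S ∩ P).card ≤ P.card := Finset.card_le_card Finset.inter_subset_right
  omega
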